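/- Let A be a simple finite-dimensional algebra over a field F of characteristic zero with a comultiplication Δ such that the Drinfeld double D(A) is a direct sum A₁ ⊕ A₂ of two proper simple ideals, let φ₁, φ₂ : A* → A be the linear maps with f − φᵢ(f) ∈ Aᵢ for all f ∈ A*, and let ψ : A → A* be the linear bijection with a = −φ₁(ψ(a)) + φ₂(ψ(a)) for all a ∈ A. Then for all a, b ∈ A: ψ(ab) = ψ(a)⇽b = a⇁ψ(b). -/
import Mathlib


open TensorProduct

/-- `I` is a (two-sided) ideal for the product `prod`. -/
def IsIdealP {F M : Type*} [Field F] [AddCommGroup M] [Module F M]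
    (prod : M → M → M) (I : Submodule F M) : Prop :=
  ∀ x ∈ I, ∀ y : M, prod x y ∈ I ∧ prod y x ∈ I

/-- The ideal `I` is simple as an algebra with the restricted product. -/
def IsSimpleIdealP {F M : Type*} [Field F] [AddCommGroup M] [Module F M]
    (prod : M → M → M) (I : Submodule F M) : Prop :=
  (∃ x ∈ I, ∃ y ∈ I, prod x y ≠ 0) ∧
    ∀ J : Submodule F M, J ≤ I →
      (∀ x ∈ J, ∀ y ∈ I, prod x y ∈ J ∧ prod y x ∈ J) → J = ⊥ ∨ J = I

/-- The multiplication of the Drinfeld double `D(A) = A ⊕ A*` associated with the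
bilinear product `mul` and the comultiplication `Δ`:
`(a + f)(b + g) = (ab + f⇀b + a↼g) + (fg + f⇽b + a⇁g)`. -/
noncomputable def dmul {F A : Type*} [Field F] [AddCommGroup A] [Module F A]
    (mul : A →ₗ[F] A →ₗ[F] A) (Δ : A →ₗ[F] A ⊗[F] A)
    (p q : A × Module.Dual F A) : A × Module.Dual F A :=
  (mul p.1 q.1
      + TensorProduct.rid F A (LinearMap.lTensor A p.2 (Δ q.1))
      + TensorProduct.lid F A (LinearMap.rTensor A q.2 (Δ p.1)),
    Δ.dualMap (TensorProduct.dualDistrib F A A (p.2 ⊗ₜ[F] q.2))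
      + p.2.comp (mul q.1)
      + q.2.comp (mul.flip p.1))


lemma dmul_add_left' {F A : Type*} [Field F] [AddCommGroup A] [Module F A]
    (mul : A →ₗ[F] A →ₗ[F] A) (Δ : A →ₗ[F] A ⊗[F] A)
    (p p' q : A × Module.Dual F A) :
    dmul mul Δ (p + p') q = dmul mul Δ p q + dmul mul Δ p' q := by
  simp only [dmul, Prod.fst_add, Prod.snd_add, map_add, LinearMap.add_apply,
    TensorProduct.add_tmul, LinearMap.lTensor_add, LinearMap.add_comp, LinearMap.comp_add,
    Prod.mk_add_mk, Prod.mk.injEq]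
  constructor <;> abel

lemma dmul_add_right' {F A : Type*} [Field F] [AddCommGroup A] [Module F A]
    (mul : A →ₗ[F] A →ₗ[F] A) (Δ : A →ₗ[F] A ⊗[F] A)
    (p q q' : A × Module.Dual F A) :
    dmul mul Δ p (q + q') = dmul mul Δ p q + dmul mul Δ p q' := by
  simp only [dmul, Prod.fst_add, Prod.snd_add, map_add, LinearMap.add_apply,
    TensorProduct.tmul_add, LinearMap.rTensor_add, LinearMap.add_comp, LinearMap.comp_add,
    Prod.mk_add_mk, Prod.mk.injEq]
  constructor <;> abel

lemma dmul_base' {F A : Type*} [Field F] [AddCommGroup A] [Module F A]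
    (mul : A →ₗ[F] A →ₗ[F] A) (Δ : A →ₗ[F] A ⊗[F] A) (a b : A) :
    dmul mul Δ ((a, 0) : A × Module.Dual F A) (b, 0) = (mul a b, 0) := by
  simp [dmul]

theorem stmt5 {F A : Type*} [Field F] [CharZero F] [AddCommGroup A] [Module F A]
    [FiniteDimensional F A] (mul : A →ₗ[F] A →ₗ[F] A)
    -- `A` is simple
    (hsimple : (∃ x y : A, mul x y ≠ 0) ∧
      ∀ I : Submodule F A, (∀ x ∈ I, ∀ y : A, mul x y ∈ I ∧ mul y x ∈ I) → I = ⊥ ∨ I = ⊤)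
    -- a comultiplication on `A`
    (Δ : A →ₗ[F] A ⊗[F] A)
    -- `D(A) = A₁ ⊕ A₂`, a direct sum of two proper simple ideals
    (A₁ A₂ : Submodule F (A × Module.Dual F A))
    (h1b : A₁ ≠ ⊥) (h1t : A₁ ≠ ⊤) (h2b : A₂ ≠ ⊥) (h2t : A₂ ≠ ⊤)
    (hcompl : IsCompl A₁ A₂)
    (hid1 : IsIdealP (dmul mul Δ) A₁) (hid2 : IsIdealP (dmul mul Δ) A₂)
    (hs1 : IsSimpleIdealP (dmul mul Δ) A₁) (hs2 : IsSimpleIdealP (dmul mul Δ) A₂)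
    -- the linear maps `φᵢ` with `f - φᵢ(f) ∈ Aᵢ` for all `f ∈ A*`
    (φ₁ φ₂ : Module.Dual F A →ₗ[F] A)
    (hφ1 : ∀ f : Module.Dual F A, ((-φ₁ f, f) : A × Module.Dual F A) ∈ A₁)
    (hφ2 : ∀ f : Module.Dual F A, ((-φ₂ f, f) : A × Module.Dual F A) ∈ A₂)
    -- the linear bijection `ψ` with `a = -φ₁(ψ a) + φ₂(ψ a)` for all `a ∈ A`
    (ψ : A →ₗ[F] Module.Dual F A) (hψbij : Function.Bijective ψ)
    (hψ : ∀ c : A, c = -φ₁ (ψ c) + φ₂ (ψ c))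
    :
    ∀ c d : A,
      ψ (mul c d) = (ψ c).comp (mul d) ∧
      ψ (mul c d) = (ψ d).comp (mul.flip c) := by
  intro c d
  -- decomposition of `(e, 0)` into its `A₁` and `A₂` components
  have key : ∀ e : A, ((e, (0 : Module.Dual F A)) : A × Module.Dual F A)
      = (-φ₁ (ψ e), ψ e) + (φ₂ (ψ e), -(ψ e)) := by
    intro e
    rw [Prod.mk_add_mk]
    refine Prod.ext ?_ ?_
    · exact hψ e
    · simp
  have hv : ∀ f : Module.Dual F A, ((φ₂ f, -f) : A × Module.Dual F A) ∈ A₂ := fun f => by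
    simpa using A₂.neg_mem (hφ2 f)
  -- products of elements of the two ideals vanish
  have hcross : ∀ x ∈ A₁, ∀ y ∈ A₂, dmul mul Δ x y = 0 ∧ dmul mul Δ y x = 0 := by
    intro x hx y hy
    constructor
    · have h12 : dmul mul Δ x y ∈ A₁ ⊓ A₂ := ⟨(hid1 x hx y).1, (hid2 y hy x).2⟩
      rwa [hcompl.inf_eq_bot, Submodule.mem_bot] at h12
    · have h12 : dmul mul Δ y x ∈ A₁ ⊓ A₂ := ⟨(hid1 x hx y).2, (hid2 y hy x).1⟩
      rwa [hcompl.inf_eq_bot, Submodule.mem_bot] at h12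
  set uc : A × Module.Dual F A := (-φ₁ (ψ c), ψ c) with huc
  set ud : A × Module.Dual F A := (-φ₁ (ψ d), ψ d) with hud
  set vc : A × Module.Dual F A := (φ₂ (ψ c), -(ψ c)) with hvc
  set vd : A × Module.Dual F A := (φ₂ (ψ d), -(ψ d)) with hvd
  have hexp : dmul mul Δ uc ud + dmul mul Δ vc vd
      = (-φ₁ (ψ (mul c d)), ψ (mul c d)) + (φ₂ (ψ (mul c d)), -(ψ (mul c d))) := by
    rw [← key (mul c d), ← dmul_base' mul Δ c d, key c, key d,
      dmul_add_left', dmul_add_right', dmul_add_right',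
      (hcross uc (hφ1 (ψ c)) vd (hv (ψ d))).1,
      (hcross ud (hφ1 (ψ d)) vc (hv (ψ c))).2]
    abel
  -- uniqueness of the decomposition
  have huniq : dmul mul Δ uc ud = (-φ₁ (ψ (mul c d)), ψ (mul c d)) := by
    have hm : dmul mul Δ uc ud - (-φ₁ (ψ (mul c d)), ψ (mul c d)) ∈ A₁ ⊓ A₂ := by
      constructor
      · exact A₁.sub_mem ((hid1 uc (hφ1 (ψ c)) ud).1) (hφ1 (ψ (mul c d)))
      · have heq : dmul mul Δ uc ud - (-φ₁ (ψ (mul c d)), ψ (mul c d))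
            = (φ₂ (ψ (mul c d)), -(ψ (mul c d))) - dmul mul Δ vc vd :=
          sub_eq_sub_iff_add_eq_add.mpr (hexp.trans (add_comm _ _))
        rw [heq]
        exact A₂.sub_mem (hv (ψ (mul c d))) ((hid2 vc (hv (ψ c)) vd).1)
    rw [hcompl.inf_eq_bot, Submodule.mem_bot, sub_eq_zero] at hm
    exact hm
  have hE1 : (dmul mul Δ uc ud).2 = ψ (mul c d) := congrArg Prod.snd huniq
  have hE3 : (dmul mul Δ uc vd).2 = 0 :=
    congrArg Prod.snd (hcross uc (hφ1 (ψ c)) vd (hv (ψ d))).1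
  have hE4 : (dmul mul Δ vc ud).2 = 0 :=
    congrArg Prod.snd (hcross ud (hφ1 (ψ d)) vc (hv (ψ c))).2
  simp only [dmul, huc, hud, hvc, hvd] at hE1 hE3 hE4
  constructor
  · ext b
    have e1 := DFunLike.congr_fun hE1 b
    have e3 := DFunLike.congr_fun hE3 b
    have e5 : ψ c (mul d b) = -(ψ c (mul (φ₁ (ψ d)) b)) + ψ c (mul (φ₂ (ψ d)) b) := by
      conv_lhs => rw [hψ d]
      simp
    have eT : (Δ.dualMap ((TensorProduct.dualDistrib F A A) (-(ψ c ⊗ₜ[F] ψ d)))) b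
        = -((Δ.dualMap ((TensorProduct.dualDistrib F A A) (ψ c ⊗ₜ[F] ψ d))) b) := by
      rw [map_neg (TensorProduct.dualDistrib F A A), map_neg Δ.dualMap, LinearMap.neg_apply]
    simp only [LinearMap.add_apply, LinearMap.comp_apply, LinearMap.neg_apply, map_neg,
      TensorProduct.tmul_neg, TensorProduct.neg_tmul, LinearMap.flip_apply, neg_neg,
      LinearMap.zero_apply] at e1 e3 ⊢
    linear_combination -e1 - e3 + eT - e5
  · ext b
    have e1 := DFunLike.congr_fun hE1 b
    have e4 := DFunLike.congr_fun hE4 b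
    have e5 : ψ d (mul b c) = -(ψ d (mul b (φ₁ (ψ c)))) + ψ d (mul b (φ₂ (ψ c))) := by
      conv_lhs => rw [hψ c]
      simp
    have eT : (Δ.dualMap ((TensorProduct.dualDistrib F A A) (-(ψ c ⊗ₜ[F] ψ d)))) b
        = -((Δ.dualMap ((TensorProduct.dualDistrib F A A) (ψ c ⊗ₜ[F] ψ d))) b) := by
      rw [map_neg (TensorProduct.dualDistrib F A A), map_neg Δ.dualMap, LinearMap.neg_apply]
    simp only [LinearMap.add_apply, LinearMap.comp_apply, LinearMap.neg_apply, map_neg,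
      TensorProduct.tmul_neg, TensorProduct.neg_tmul, LinearMap.flip_apply, neg_neg,
      LinearMap.zero_apply] at e1 e4 ⊢
    linear_combination -e1 - e4 + eT - e5
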